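/- Decay of Jost function remainders: suppose m : [0,∞) → ℂ² satisfies the Volterra integral equation m(x) = m_∞ + ∫ₓ^∞ G(x-y) V(y) m(y) dy where |G(z)| ≤ C₁⟨z⟩ for z ≤ 0, ‖m‖_{L^∞([0,∞))} ≤ C₂, and |V(y)| ≤ K⟨y⟩⁻³. Then |m(x) - m_∞| ≤ C K ⟨x⟩⁻¹ for all x ≥ 0, with C depending only on C₁, C₂. In particular m - m_∞ ∈ L²(0,∞). -/

import Mathlib

open MeasureTheory Matrix Real

lemma arctan_nonneg' {x : ℝ} (hx : 0 ≤ x) : 0 ≤ Real.arctan x := by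
  rw [← Real.arctan_zero]
  exact Real.arctan_strictMono.monotone hx

lemma aux_arctan (x : ℝ) (hx : 0 ≤ x) :
    π/2 - Real.arctan x ≤ 4 * (Real.sqrt (1 + x ^ 2))⁻¹ := by
  have hs : (0:ℝ) < Real.sqrt (1 + x ^ 2) := Real.sqrt_pos.mpr (by positivity)
  have hs1 : Real.sqrt (1 + x ^ 2) ≤ 1 + x := by
    rw [show (1:ℝ) + x = Real.sqrt ((1+x)^2) from (Real.sqrt_sq (by linarith)).symm]
    exact Real.sqrt_le_sqrt (by nlinarith)
  rw [← div_eq_mul_inv, le_div_iff₀ hs]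
  have key : (π/2 - Real.arctan x) * (1 + x) ≤ 4 := by
    rcases le_total x 1 with h | h
    · have h1 : Real.arctan x ≥ 0 := arctan_nonneg' hx
      have h2 : π < 3.2 := by linarith [Real.pi_lt_d2]
      nlinarith
    · have hx0 : (0:ℝ) < x := by linarith
      have h1 : π/2 - Real.arctan x = Real.arctan x⁻¹ := (Real.arctan_inv_of_pos hx0).symm
      have h2 : Real.arctan x⁻¹ ≤ x⁻¹ := by
        have h3 := Real.le_tan (arctan_nonneg' (by positivity)) (Real.arctan_lt_pi_div_two x⁻¹)
        rwa [Real.tan_arctan] at h3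
      have h4 : x⁻¹ ≤ 1 := by rw [inv_le_one_iff₀]; right; exact h
      have h5 : (1 + x) * x⁻¹ = x⁻¹ + 1 := by field_simp
      have h6 : (0:ℝ) ≤ x⁻¹ := by positivity
      calc (π/2 - Real.arctan x) * (1 + x) ≤ x⁻¹ * (1 + x) := by
            rw [h1]; exact mul_le_mul_of_nonneg_right h2 (by linarith)
        _ = x⁻¹ + 1 := by rw [mul_comm, h5]
        _ ≤ 4 := by linarith
  have := mul_le_mul_of_nonneg_left hs1 (le_of_lt (by
    linarith [Real.arctan_lt_pi_div_two x] : (0:ℝ) < π/2 - Real.arctan x))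
  linarith

lemma coord_le_norm (w : EuclideanSpace ℂ (Fin 2)) (j : Fin 2) : ‖w j‖ ≤ ‖w‖ := by
  rw [EuclideanSpace.norm_eq]
  have h : ‖w j‖ ^ 2 ≤ ∑ i, ‖w i‖ ^ 2 :=
    Finset.single_le_sum (f := fun i => ‖w i‖ ^ 2) (fun i _ => sq_nonneg _) (Finset.mem_univ j)
  calc ‖w j‖ = Real.sqrt (‖w j‖ ^ 2) := (Real.sqrt_sq (norm_nonneg _)).symm
    _ ≤ _ := Real.sqrt_le_sqrt h

lemma euclid_norm_le (v : Fin 2 → ℂ) :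
    ‖(WithLp.equiv 2 (Fin 2 → ℂ)).symm v‖ ≤ ‖v 0‖ + ‖v 1‖ := by
  have h : ‖(WithLp.equiv 2 (Fin 2 → ℂ)).symm v‖
      = Real.sqrt (‖v 0‖ ^ 2 + ‖v 1‖ ^ 2) := by
    rw [EuclideanSpace.norm_eq]; simp [Fin.sum_univ_two]
  rw [h]
  calc Real.sqrt (‖v 0‖ ^ 2 + ‖v 1‖ ^ 2) ≤ Real.sqrt ((‖v 0‖ + ‖v 1‖) ^ 2) :=
        Real.sqrt_le_sqrt (by nlinarith [mul_nonneg (norm_nonneg (v 0)) (norm_nonneg (v 1))])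
    _ = ‖v 0‖ + ‖v 1‖ := Real.sqrt_sq (by positivity)

lemma integrand_bound (G V : ℝ → Matrix (Fin 2) (Fin 2) ℂ)
    (m : ℝ → EuclideanSpace ℂ (Fin 2))
    (C₁ C₂ K : ℝ) (hC₁ : 0 < C₁) (hC₂ : 0 < C₂) (hK : 0 < K)
    (hG : ∀ z : ℝ, z ≤ 0 → ∀ i j, ‖G z i j‖ ≤ C₁ * Real.sqrt (1 + z ^ 2))
    (hV : ∀ y : ℝ, 0 ≤ y → ∀ i j, ‖V y i j‖ ≤ K * (Real.sqrt (1 + y ^ 2))⁻¹ ^ 3)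
    (hm : ∀ x : ℝ, 0 ≤ x → ‖m x‖ ≤ C₂)
    (x : ℝ) (hx : 0 ≤ x) (y : ℝ) (hy : x < y) :
    ‖(WithLp.equiv 2 (Fin 2 → ℂ)).symm ((G (x - y) * V y).mulVec (m y))‖
      ≤ 8 * C₁ * C₂ * K * (1 + y ^ 2)⁻¹ := by
  have hy0 : 0 ≤ y := le_of_lt (lt_of_le_of_lt hx hy)
  have hmy : ‖m y‖ ≤ C₂ := hm y hy0
  set a : ℝ := C₁ * Real.sqrt (1 + (x - y) ^ 2) with ha
  set b : ℝ := K * (Real.sqrt (1 + y ^ 2))⁻¹ ^ 3 with hb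
  have hsy : (0:ℝ) < Real.sqrt (1 + y ^ 2) := Real.sqrt_pos.mpr (by positivity)
  have ha0 : 0 ≤ a := by positivity
  have hb0 : 0 ≤ b := by positivity
  -- entry bound for the product matrix
  have hentry : ∀ i j, ‖(G (x - y) * V y) i j‖ ≤ 2 * (a * b) := by
    intro i j
    rw [Matrix.mul_apply, Fin.sum_univ_two]
    have h1 : ‖G (x - y) i 0 * V y 0 j‖ ≤ a * b := by
      rw [norm_mul]
      exact mul_le_mul (hG _ (by linarith) i 0) (hV _ hy0 0 j) (norm_nonneg _) ha0
    have h2 : ‖G (x - y) i 1 * V y 1 j‖ ≤ a * b := by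
      rw [norm_mul]
      exact mul_le_mul (hG _ (by linarith) i 1) (hV _ hy0 1 j) (norm_nonneg _) ha0
    calc ‖G (x - y) i 0 * V y 0 j + G (x - y) i 1 * V y 1 j‖
        ≤ ‖G (x - y) i 0 * V y 0 j‖ + ‖G (x - y) i 1 * V y 1 j‖ := norm_add_le _ _
      _ ≤ 2 * (a * b) := by linarith
  -- component bound
  have hcomp : ∀ i, ‖((G (x - y) * V y).mulVec (m y)) i‖ ≤ 4 * (a * b) * C₂ := by
    intro i
    have : ((G (x - y) * V y).mulVec (m y)) i
        = (G (x - y) * V y) i 0 * m y 0 + (G (x - y) * V y) i 1 * m y 1 := by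
      simp [Matrix.mulVec, dotProduct, Fin.sum_univ_two]
    rw [this]
    have h0 : ‖(G (x - y) * V y) i 0 * m y 0‖ ≤ 2 * (a * b) * C₂ := by
      rw [norm_mul]
      exact mul_le_mul (hentry i 0) ((coord_le_norm (m y) 0).trans hmy)
        (norm_nonneg _) (by positivity)
    have h1 : ‖(G (x - y) * V y) i 1 * m y 1‖ ≤ 2 * (a * b) * C₂ := by
      rw [norm_mul]
      exact mul_le_mul (hentry i 1) ((coord_le_norm (m y) 1).trans hmy)
        (norm_nonneg _) (by positivity)
    calc _ ≤ ‖(G (x - y) * V y) i 0 * m y 0‖ + ‖(G (x - y) * V y) i 1 * m y 1‖ :=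
          norm_add_le _ _
      _ ≤ 4 * (a * b) * C₂ := by linarith
  have hnorm : ‖(WithLp.equiv 2 (Fin 2 → ℂ)).symm ((G (x - y) * V y).mulVec (m y))‖
      ≤ 8 * (a * b) * C₂ := by
    calc _ ≤ ‖((G (x - y) * V y).mulVec (m y)) 0‖ + ‖((G (x - y) * V y).mulVec (m y)) 1‖ :=
          euclid_norm_le _
      _ ≤ 8 * (a * b) * C₂ := by linarith [hcomp 0, hcomp 1]
  -- estimate a * b
  have hab : a * b ≤ C₁ * K * (1 + y ^ 2)⁻¹ := by
    have h1 : Real.sqrt (1 + (x - y) ^ 2) ≤ Real.sqrt (1 + y ^ 2) :=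
      Real.sqrt_le_sqrt (by nlinarith)
    have h2 : Real.sqrt (1 + y ^ 2) ^ 2 = 1 + y ^ 2 := Real.sq_sqrt (by positivity)
    have h3 : Real.sqrt (1 + y ^ 2) * (Real.sqrt (1 + y ^ 2))⁻¹ ^ 3 = (1 + y ^ 2)⁻¹ := by
      field_simp
      nlinarith [h2]
    calc a * b = C₁ * K * (Real.sqrt (1 + (x - y) ^ 2) * (Real.sqrt (1 + y ^ 2))⁻¹ ^ 3) := by
          ring
      _ ≤ C₁ * K * (Real.sqrt (1 + y ^ 2) * (Real.sqrt (1 + y ^ 2))⁻¹ ^ 3) := by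
          gcongr
      _ = C₁ * K * (1 + y ^ 2)⁻¹ := by rw [h3]
  calc _ ≤ 8 * (a * b) * C₂ := hnorm
    _ ≤ 8 * (C₁ * K * (1 + y ^ 2)⁻¹) * C₂ := by gcongr
    _ = 8 * C₁ * C₂ * K * (1 + y ^ 2)⁻¹ := by ring

/-- Decay of Jost function remainders: if `m(x) = mInf + ∫ₓ^∞ G(x-y) V(y) m(y) dy` with
`‖G(z)‖ ≤ C₁⟨z⟩`, `‖m‖ ≤ C₂`, `‖V(y)‖ ≤ K⟨y⟩⁻³`, then `‖m(x) - mInf‖ ≤ C K ⟨x⟩⁻¹` for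
`x ≥ 0` with `C = C(C₁,C₂)`; in particular `m - mInf ∈ L²(0,∞)`. -/
theorem jost_remainder_decay
    (G V : ℝ → Matrix (Fin 2) (Fin 2) ℂ)
    (m : ℝ → EuclideanSpace ℂ (Fin 2)) (mInf : EuclideanSpace ℂ (Fin 2))
    (C₁ C₂ K : ℝ) (hC₁ : 0 < C₁) (hC₂ : 0 < C₂) (hK : 0 < K)
    (hG : ∀ z : ℝ, z ≤ 0 → ∀ i j, ‖G z i j‖ ≤ C₁ * Real.sqrt (1 + z ^ 2))
    (hV : ∀ y : ℝ, 0 ≤ y → ∀ i j, ‖V y i j‖ ≤ K * (Real.sqrt (1 + y ^ 2))⁻¹ ^ 3)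
    (hm : ∀ x : ℝ, 0 ≤ x → ‖m x‖ ≤ C₂)
    (hmeas : AEStronglyMeasurable m (volume : MeasureTheory.Measure ℝ))
    (heq : ∀ x : ℝ, 0 ≤ x →
      m x = mInf + ∫ y in Set.Ioi x, (WithLp.equiv 2 (Fin 2 → ℂ)).symm ((G (x - y) * V y).mulVec (m y))) :
    ∃ C : ℝ, 0 < C ∧
      (∀ x : ℝ, 0 ≤ x → ‖m x - mInf‖ ≤ C * K * (Real.sqrt (1 + x ^ 2))⁻¹) ∧
      MemLp (fun x => m x - mInf) 2 (volume.restrict (Set.Ioi (0 : ℝ))) := by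
  have hbound : ∀ x : ℝ, 0 ≤ x →
      ‖m x - mInf‖ ≤ 32 * C₁ * C₂ * K * (Real.sqrt (1 + x ^ 2))⁻¹ := by
    intro x hx
    have hdiff : m x - mInf = ∫ y in Set.Ioi x,
        (WithLp.equiv 2 (Fin 2 → ℂ)).symm ((G (x - y) * V y).mulVec (m y)) := by
      rw [heq x hx, add_sub_cancel_left]
    rw [hdiff]
    have hint : Integrable (fun y : ℝ => 8 * C₁ * C₂ * K * (1 + y ^ 2)⁻¹)
        (volume.restrict (Set.Ioi x)) := (integrable_inv_one_add_sq.const_mul _).restrict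
    have hae : ∀ᵐ y ∂(volume.restrict (Set.Ioi x)),
        ‖(WithLp.equiv 2 (Fin 2 → ℂ)).symm ((G (x - y) * V y).mulVec (m y))‖
          ≤ 8 * C₁ * C₂ * K * (1 + y ^ 2)⁻¹ :=
      (ae_restrict_iff' measurableSet_Ioi).mpr (ae_of_all _ fun y hy =>
        integrand_bound G V m C₁ C₂ K hC₁ hC₂ hK hG hV hm x hx y hy)
    have hpos : (0:ℝ) ≤ π / 2 - Real.arctan x := by
      linarith [Real.arctan_lt_pi_div_two x]
    calc ‖∫ y in Set.Ioi x, (WithLp.equiv 2 (Fin 2 → ℂ)).symm ((G (x - y) * V y).mulVec (m y))‖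
        ≤ ∫ y in Set.Ioi x, 8 * C₁ * C₂ * K * (1 + y ^ 2)⁻¹ :=
          norm_integral_le_of_norm_le hint hae
      _ = 8 * C₁ * C₂ * K * (π / 2 - Real.arctan x) := by
          rw [integral_const_mul, integral_Ioi_inv_one_add_sq]
      _ ≤ 8 * C₁ * C₂ * K * (4 * (Real.sqrt (1 + x ^ 2))⁻¹) := by
          exact mul_le_mul_of_nonneg_left (aux_arctan x hx) (by positivity)
      _ = 32 * C₁ * C₂ * K * (Real.sqrt (1 + x ^ 2))⁻¹ := by ring
  refine ⟨32 * C₁ * C₂, by positivity, fun x hx => hbound x hx, ?_⟩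
  have hgmem : MemLp (fun x : ℝ => 32 * C₁ * C₂ * K * (Real.sqrt (1 + x ^ 2))⁻¹) 2
      (volume.restrict (Set.Ioi (0:ℝ))) := by
    have hcont : Continuous fun x : ℝ => 32 * C₁ * C₂ * K * (Real.sqrt (1 + x ^ 2))⁻¹ := by
      refine continuous_const.mul (Continuous.inv₀
        (Real.continuous_sqrt.comp (continuous_const.add (continuous_pow 2)))
        fun x => ?_)
      exact ne_of_gt (Real.sqrt_pos.mpr (by positivity))
    rw [memLp_two_iff_integrable_sq hcont.aestronglyMeasurable]
    have heqf : (fun x : ℝ => (32 * C₁ * C₂ * K * (Real.sqrt (1 + x ^ 2))⁻¹) ^ 2)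
        = fun x : ℝ => (32 * C₁ * C₂ * K) ^ 2 * (1 + x ^ 2)⁻¹ := by
      funext x
      rw [mul_pow, inv_pow, Real.sq_sqrt (by positivity)]
    rw [heqf]
    exact (integrable_inv_one_add_sq.const_mul _).restrict
  refine hgmem.of_le ((hmeas.sub aestronglyMeasurable_const).restrict) ?_
  refine (ae_restrict_iff' measurableSet_Ioi).mpr (ae_of_all _ fun x hx => ?_)
  have h := hbound x (le_of_lt hx)
  rwa [Real.norm_of_nonneg (by positivity)]
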